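/- Suppose n is even, δ = 0 and σ ≠ 0, and set c = cos((n/2)π/(n+1)) > 0, so λ_{n/2} = 2σc = −λ_{(n+2)/2} are the two eigenvalues of smallest magnitude and κ(n/2) = κ((n+2)/2). Then the structured distance to singularity is d_F^𝒯(T) = min_{S ∈ 𝒮 ∩ 𝒯} ‖T − S‖_F = |λ_{n/2}|/κ(n/2), and it is attained by the two distinct matrices M± = T ∓ (λ_{n/2}/κ(n/2)²)·(n; 1/n, ±c/(n−1)), both of which are singular symmetric tridiagonal Toeplitz matrices at Frobenius distance |λ_{n/2}|/κ(n/2) from T. -/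

import Mathlib

open Real Filter

noncomputable def tridiag (n : ℕ) (d s : ℝ) : Matrix (Fin n) (Fin n) ℝ :=
  Matrix.of fun i j =>
    if (i : ℕ) = (j : ℕ) then d
    else if (i : ℕ) + 1 = (j : ℕ) ∨ (j : ℕ) + 1 = (i : ℕ) then s else 0

noncomputable def lam (n : ℕ) (δ σ : ℝ) (h : ℕ) : ℝ :=
  δ + 2 * σ * Real.cos (h * Real.pi / (n + 1))

noncomputable def kap (n h : ℕ) : ℝ :=
  Real.sqrt (1 / (n : ℝ) + 2 / ((n : ℝ) - 1) * Real.cos (h * Real.pi / (n + 1)) ^ 2)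

noncomputable def evec (n h : ℕ) : Fin n → ℝ :=
  fun k => Real.sqrt (2 / (n + 1)) * Real.sin (h * (k.1 + 1) * Real.pi / (n + 1))

noncomputable def frobNorm {n : ℕ} (A : Matrix (Fin n) (Fin n) ℝ) : ℝ :=
  Real.sqrt (∑ i, ∑ j, A i j ^ 2)

lemma tridiag_sub (n : ℕ) (a b a' b' : ℝ) :
    tridiag n a b - tridiag n a' b' = tridiag n (a-a') (b-b') := by
  ext i j
  simp only [Matrix.sub_apply, tridiag, Matrix.of_apply]
  split_ifs <;> ring

lemma tridiag_smul (n : ℕ) (r a b : ℝ) :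
    r • tridiag n a b = tridiag n (r*a) (r*b) := by
  ext i j
  simp only [Matrix.smul_apply, tridiag, Matrix.of_apply, smul_eq_mul]
  split_ifs <;> ring

lemma tridiag_add (n : ℕ) (a b a' b' : ℝ) :
    tridiag n a b + tridiag n a' b' = tridiag n (a+a') (b+b') := by
  ext i j
  simp only [Matrix.add_apply, tridiag, Matrix.of_apply]
  split_ifs <;> ring


noncomputable def extv (n : ℕ) (v : Fin n → ℝ) (k : ℕ) : ℝ :=
  if h : 1 ≤ k ∧ k ≤ n then v ⟨k - 1, by omega⟩ else 0

lemma extv_zero (n : ℕ) (v : Fin n → ℝ) : extv n v 0 = 0 := by simp [extv]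

lemma extv_top (n : ℕ) (v : Fin n → ℝ) : extv n v (n+1) = 0 := by simp [extv]

lemma extv_val (n : ℕ) (v : Fin n → ℝ) (i : Fin n) : extv n v (i.1 + 1) = v i := by
  have h : 1 ≤ i.1 + 1 ∧ i.1 + 1 ≤ n := ⟨by omega, i.2⟩
  simp only [extv, dif_pos h]
  exact congrArg v (Fin.ext (by simp))

lemma tridiag_mulVec (n : ℕ) (d s : ℝ) (v : Fin n → ℝ) (i : Fin n) :
    (tridiag n d s).mulVec v i
      = s * extv n v i.1 + d * extv n v (i.1+1) + s * extv n v (i.1+2) := by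
  unfold Matrix.mulVec dotProduct tridiag
  simp only [Matrix.of_apply]
  have split : ∀ j : Fin n,
      (if (i:ℕ) = (j:ℕ) then d else if (i:ℕ)+1 = (j:ℕ) ∨ (j:ℕ)+1 = (i:ℕ) then s else 0) * v j
      = (if (j:ℕ)+1 = (i:ℕ) then s * v j else 0)
        + (if (i:ℕ) = (j:ℕ) then d * v j else 0)
        + (if (i:ℕ)+1 = (j:ℕ) then s * v j else 0) := by
    intro j
    split_ifs <;> first | ring1 | (exfalso; omega)
  rw [Finset.sum_congr rfl (fun j _ => split j), Finset.sum_add_distrib, Finset.sum_add_distrib]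
  congr 1
  congr 1
  · rcases Nat.eq_zero_or_pos i.1 with h0 | h0
    · rw [Finset.sum_eq_zero]
      · have : ¬ (1 ≤ i.1 ∧ i.1 ≤ n) := by omega
        simp [extv, this, h0]
      · intro j _; rw [if_neg]; omega
    · rw [Finset.sum_eq_single (⟨i.1 - 1, by omega⟩ : Fin n)]
      · rw [if_pos (show (i.1-1) + 1 = i.1 by omega)]
        simp only [extv, dif_pos (show 1 ≤ i.1 ∧ i.1 ≤ n from ⟨h0, le_of_lt i.2⟩)]
      · intro j _ hj; rw [if_neg]; intro hc
        exact hj (Fin.ext (show j.1 = i.1 - 1 by omega))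
      · intro hmem; exact absurd (Finset.mem_univ _) hmem
  · rw [Finset.sum_eq_single i]
    · rw [if_pos rfl, extv_val]
    · intro j _ hj; rw [if_neg]; intro hc; exact hj (Fin.ext hc.symm)
    · intro hmem; exact absurd (Finset.mem_univ _) hmem
  · by_cases h0 : i.1 + 1 < n
    · rw [Finset.sum_eq_single (⟨i.1 + 1, h0⟩ : Fin n)]
      · rw [if_pos rfl]
        simp only [extv, dif_pos (show 1 ≤ i.1+2 ∧ i.1+2 ≤ n from ⟨by omega, by omega⟩)]
        exact congrArg (s * v ·) (Fin.ext (by simp))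
      · intro j _ hj; rw [if_neg]; intro hc
        exact hj (Fin.ext (show j.1 = i.1 + 1 by omega))
      · intro hmem; exact absurd (Finset.mem_univ _) hmem
    · rw [Finset.sum_eq_zero]
      · have : ¬ (1 ≤ i.1+2 ∧ i.1+2 ≤ n) := by omega
        rw [extv, dif_neg this, mul_zero]
      · intro j _; rw [if_neg]; have := j.2; omega


lemma extv_evec (n h : ℕ) (k : ℕ) (hk : k ≤ n + 1) :
    extv n (evec n h) k = Real.sqrt (2/(n+1)) * Real.sin (h * k * Real.pi / (n+1)) := by
  rcases Nat.eq_zero_or_pos k with rfl | hk0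
  · simp [extv]
  rcases eq_or_lt_of_le hk with rfl | hk1
  · have : ¬ (1 ≤ n+1 ∧ n+1 ≤ n) := by omega
    rw [extv, dif_neg this]
    have e : (h:ℝ) * ((n:ℕ)+1 : ℕ) * π / ((n:ℝ)+1) = h * π := by
      push_cast
      field_simp
    rw [e, Real.sin_nat_mul_pi, mul_zero]
  · rw [extv, dif_pos ⟨hk0, by omega⟩]
    unfold evec
    congr 2
    push_cast [Nat.cast_sub hk0]
    ring_nf


lemma tridiag_mulVec_evec (n : ℕ) (d s : ℝ) (h : ℕ) :
    (tridiag n d s).mulVec (evec n h)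
      = (d + 2*s*Real.cos (h*Real.pi/(n+1))) • evec n h := by
  funext i
  have hi := i.2
  rw [tridiag_mulVec, extv_evec n h i.1 (by omega), extv_evec n h (i.1+1) (by omega),
      extv_evec n h (i.1+2) (by omega)]
  set C := Real.sqrt (2/(n+1))
  set A := (h:ℝ) * π / (n+1) with hA
  have e : ∀ k : ℕ, (h:ℝ) * k * π / (n+1) = k * A := by
    intro k; rw [hA]; ring
  rw [e, e, e]
  simp only [Pi.smul_apply, smul_eq_mul]
  unfold evec
  rw [show ((h:ℝ) * (i.1+1) * π / (n+1)) = ((i.1:ℝ)+1) * A by rw [hA]; ring]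
  push_cast
  rw [show ((i.1:ℝ)+2) * A = ((i.1:ℝ)+1)*A + A by ring,
      show ((i.1:ℝ)) * A = ((i.1:ℝ)+1)*A - A by ring,
      Real.sin_add, Real.sin_sub]
  ring

lemma evec_ne_zero (n h : ℕ) (hn : 1 ≤ n) (hh1 : 1 ≤ h) (hh2 : h ≤ n) : evec n h ≠ 0 := by
  intro hz
  have := congrFun hz ⟨0, by omega⟩
  simp only [evec, Pi.zero_apply] at this
  have hpi := Real.pi_pos
  have hsin : 0 < Real.sin (h * (0+1) * π / (n+1)) := by
    apply Real.sin_pos_of_pos_of_lt_pi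
    · push_cast
      positivity
    · rw [div_lt_iff₀ (by positivity)]
      push_cast
      have h2 : (h:ℝ) ≤ n := Nat.cast_le.2 hh2
      nlinarith
  have hsq : 0 < Real.sqrt (2/(n+1)) := Real.sqrt_pos.2 (by positivity)
  push_cast at this hsin
  nlinarith

lemma tridiag_det_zero (n : ℕ) (hn : 1 ≤ n) (d s : ℝ) (h : ℕ) (hh1 : 1 ≤ h) (hh2 : h ≤ n)
    (hds : d + 2*s*Real.cos (h*Real.pi/(n+1)) = 0) : (tridiag n d s).det = 0 := by
  rw [← Matrix.exists_mulVec_eq_zero_iff]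
  exact ⟨evec n h, evec_ne_zero n h hn hh1 hh2,
    by rw [tridiag_mulVec_evec, hds, zero_smul]⟩

lemma frob_sum_tridiag (n : ℕ) (hn : 1 ≤ n) (d s : ℝ) :
    ∑ i, ∑ j, (tridiag n d s i j) ^ 2 = n * d^2 + 2*((n:ℝ)-1)*s^2 := by
  obtain ⟨m, rfl⟩ : ∃ m, n = m + 1 := ⟨n-1, by omega⟩
  have split : ∀ i j : Fin (m+1), (tridiag (m+1) d s i j)^2
      = (if (i:ℕ) = (j:ℕ) then d^2 else 0)
        + (if (i:ℕ)+1 = (j:ℕ) then s^2 else 0)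
        + (if (j:ℕ)+1 = (i:ℕ) then s^2 else 0) := by
    intro i j
    unfold tridiag
    simp only [Matrix.of_apply]
    split_ifs <;> first | ring1 | (exfalso; omega)
  simp only [split, Finset.sum_add_distrib]
  have S1 : ∑ i : Fin (m+1), ∑ j : Fin (m+1), (if (i:ℕ) = (j:ℕ) then d^2 else 0)
      = (m+1 : ℝ) * d^2 := by
    have inner : ∀ i : Fin (m+1), ∑ j : Fin (m+1), (if (i:ℕ) = (j:ℕ) then d^2 else 0) = d^2 := by
      intro i
      rw [Finset.sum_eq_single i]
      · rw [if_pos rfl]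
      · intro j _ hj; rw [if_neg]; intro hc; exact hj (Fin.ext hc.symm)
      · intro hmem; exact absurd (Finset.mem_univ _) hmem
    rw [Finset.sum_congr rfl (fun i _ => inner i), Finset.sum_const]
    simp only [Finset.card_univ, Fintype.card_fin, nsmul_eq_mul]
    push_cast; ring
  have inner2 : ∀ i : Fin (m+1), ∑ j : Fin (m+1), (if (i:ℕ)+1 = (j:ℕ) then s^2 else 0)
      = if (i:ℕ)+1 < m+1 then s^2 else 0 := by
    intro i
    by_cases h0 : (i:ℕ)+1 < m+1
    · rw [if_pos h0, Finset.sum_eq_single (⟨i.1+1, h0⟩ : Fin (m+1))]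
      · rw [if_pos rfl]
      · intro j _ hj; rw [if_neg]; intro hc; exact hj (Fin.ext (show j.1 = i.1+1 by omega))
      · intro hmem; exact absurd (Finset.mem_univ _) hmem
    · rw [if_neg h0, Finset.sum_eq_zero]
      intro j _; rw [if_neg]; have := j.2; omega
  have inner3 : ∀ i : Fin (m+1), ∑ j : Fin (m+1), (if (j:ℕ)+1 = (i:ℕ) then s^2 else 0)
      = if 1 ≤ (i:ℕ) then s^2 else 0 := by
    intro i
    by_cases h0 : 1 ≤ (i:ℕ)
    · rw [if_pos h0, Finset.sum_eq_single (⟨i.1-1, by omega⟩ : Fin (m+1))]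
      · rw [if_pos (show (i.1-1)+1 = i.1 by omega)]
      · intro j _ hj; rw [if_neg]; intro hc; exact hj (Fin.ext (show j.1 = i.1-1 by omega))
      · intro hmem; exact absurd (Finset.mem_univ _) hmem
    · rw [if_neg h0, Finset.sum_eq_zero]
      intro j _; rw [if_neg]; omega
  have S2 : ∑ i : Fin (m+1), ∑ j : Fin (m+1), (if (i:ℕ)+1 = (j:ℕ) then s^2 else 0)
      = (m:ℝ) * s^2 := by
    rw [Finset.sum_congr rfl (fun i _ => inner2 i), Fin.sum_univ_eq_sum_range
      (fun k => if k+1 < m+1 then s^2 else 0), Finset.sum_range_succ, if_neg (by omega),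
      add_zero, Finset.sum_congr rfl (fun k hk => if_pos (by simp at hk; omega)),
      Finset.sum_const]
    simp only [Finset.card_range, nsmul_eq_mul]
  have S3 : ∑ i : Fin (m+1), ∑ j : Fin (m+1), (if (j:ℕ)+1 = (i:ℕ) then s^2 else 0)
      = (m:ℝ) * s^2 := by
    rw [Finset.sum_congr rfl (fun i _ => inner3 i), Fin.sum_univ_eq_sum_range
      (fun k => if 1 ≤ k then s^2 else 0), Finset.sum_range_succ']
    rw [Finset.sum_congr rfl (fun k hk => if_pos (by omega)), if_neg (by omega),
      add_zero, Finset.sum_const]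
    simp only [Finset.card_range, nsmul_eq_mul]
  rw [S1, S2, S3]
  push_cast
  ring


lemma key_bound (n : ℕ) (hn : 2 ≤ n) (σ cm ch d s : ℝ) (hcm : 0 < cm)
    (hle : cm^2 ≤ ch^2) (hds : d + 2*s*ch = 0) :
    (2*σ*cm)^2 / (1/(n:ℝ) + 2/((n:ℝ)-1)*cm^2) ≤ (n:ℝ)*d^2 + 2*((n:ℝ)-1)*(σ-s)^2 := by
  have hn' : (2:ℝ) ≤ (n:ℝ) := by exact_mod_cast hn
  have hn1 : (0:ℝ) < (n:ℝ) - 1 := by linarith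
  have hn0 : (0:ℝ) < (n:ℝ) := by linarith
  have hk : 0 < 1/(n:ℝ) + 2/((n:ℝ)-1)*cm^2 := by positivity
  rw [div_le_iff₀ hk]
  have hd : d = -(2*s*ch) := by linarith
  subst hd
  have h1 : ((n:ℝ)*(2*s*ch)^2) ≥ (n:ℝ)*(2*s*cm)^2 := by nlinarith [mul_nonneg (mul_nonneg hn0.le (sq_nonneg s)) (sub_nonneg.2 hle)]
  have key : ((n:ℝ)*(2*s*cm)^2 + 2*((n:ℝ)-1)*(σ-s)^2) * (1/(n:ℝ) + 2/((n:ℝ)-1)*cm^2)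
      ≥ (2*σ*cm)^2 := by
    have expand : ((n:ℝ)*(2*s*cm)^2 + 2*((n:ℝ)-1)*(σ-s)^2) * (1/(n:ℝ) + 2/((n:ℝ)-1)*cm^2)
        - (2*σ*cm)^2
        = (2*(n:ℝ)*cm^2*s + ((n:ℝ)-1)*(s-σ))^2 * (2 / ((n:ℝ)*((n:ℝ)-1))) := by
      field_simp
      ring
    nlinarith [mul_nonneg (sq_nonneg (2*(n:ℝ)*cm^2*s + ((n:ℝ)-1)*(s-σ))) (le_of_lt (show (0:ℝ) < 2 / ((n:ℝ)*((n:ℝ)-1)) by positivity))]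
  have h2 : ((-(2*s*ch))^2 : ℝ) = (2*s*ch)^2 := by ring
  rw [h2]
  nlinarith [hk]


lemma cos_mono_seg (N : ℕ) (a b : ℕ) (hb : b ≤ N) (hab : a ≤ b) (hN : 0 < N) :
    Real.cos ((b:ℝ) * π / (N:ℝ)) ≤ Real.cos ((a:ℝ) * π / (N:ℝ)) := by
  have hpi := Real.pi_pos
  have hN' : (0:ℝ) < (N:ℝ) := by exact_mod_cast hN
  apply Real.cos_le_cos_of_nonneg_of_le_pi
  · positivity
  · rw [div_le_iff₀ hN']
    have : (b:ℝ) ≤ N := by exact_mod_cast hb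
    nlinarith
  · have : (a:ℝ) ≤ b := by exact_mod_cast hab
    gcongr

lemma cos_half_pos (m : ℕ) (hm : 1 ≤ m) :
    0 < Real.cos ((m:ℝ) * π / (2*(m:ℝ)+1)) := by
  have hpi := Real.pi_pos
  have hm' : (1:ℝ) ≤ (m:ℝ) := by exact_mod_cast hm
  apply Real.cos_pos_of_mem_Ioo
  constructor
  · have : 0 < (m:ℝ) * π / (2*(m:ℝ)+1) := by positivity
    linarith
  · rw [div_lt_iff₀ (by linarith)]
    nlinarith

lemma cos_min (n : ℕ) (hn : 2 ≤ n) (heven : Even n) (j : ℕ) (h1 : 1 ≤ j) (h2 : j ≤ n) :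
    Real.cos ((n/2 : ℕ) * π / ((n:ℝ)+1)) ≤ |Real.cos ((j:ℝ) * π / ((n:ℝ)+1))| := by
  obtain ⟨m, rfl⟩ := heven
  have hm : 1 ≤ m := by omega
  have hdiv : (m + m) / 2 = m := by omega
  rw [hdiv]
  have hcast : ((m:ℝ) + m) + 1 = 2*(m:ℝ)+1 := by ring
  push_cast
  rw [hcast]
  set N : ℕ := 2*m+1 with hN
  have hNcast : (2*(m:ℝ)+1) = (N:ℝ) := by push_cast [hN]; ring
  rw [hNcast]
  have hpos : ∀ i : ℕ, 1 ≤ i → i ≤ m → 0 < Real.cos ((i:ℝ) * π / (N:ℝ)) := by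
    intro i hi1 him
    calc 0 < Real.cos ((m:ℝ) * π / (2*(m:ℝ)+1)) := cos_half_pos m hm
    _ ≤ Real.cos ((i:ℝ) * π / (N:ℝ)) := by
        rw [hNcast]; exact cos_mono_seg N i m (by omega) him (by omega)
  by_cases hjm : j ≤ m
  · rw [abs_of_pos (hpos j h1 hjm)]
    exact cos_mono_seg N j m (by omega) hjm (by omega)
  · set j' : ℕ := N - j with hj'
    have hj'1 : 1 ≤ j' := by omega
    have hj'm : j' ≤ m := by omega
    have harg : (j:ℝ) * π / (N:ℝ) = π - (j':ℝ) * π / (N:ℝ) := by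
      have : (j':ℝ) = (N:ℝ) - j := by
        have : j ≤ N := by omega
        push_cast [hj', Nat.cast_sub this]; ring
      have hN0 : (N:ℝ) ≠ 0 := by positivity
      rw [this]
      field_simp
      ring
    rw [harg, Real.cos_pi_sub, abs_neg, abs_of_pos (hpos j' hj'1 hj'm)]
    calc Real.cos ((m:ℝ) * π / (N:ℝ)) ≤ Real.cos ((j':ℝ) * π / (N:ℝ)) :=
      cos_mono_seg N j' m (by omega) hj'm (by omega)
    _ ≤ _ := le_refl _


noncomputable def chebU (x : ℝ) : ℕ → ℝ
  | 0 => 1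
  | 1 => 2*x
  | (k+2) => 2*x*chebU x (k+1) - chebU x k

lemma chebU_ge (y : ℝ) (hy : 1 ≤ y) : ∀ k : ℕ, ((k:ℝ)+1 ≤ chebU y k ∧ chebU y k + 1 ≤ chebU y (k+1)) := by
  intro k
  induction k with
  | zero => refine ⟨by simp [chebU], ?_⟩; simp [chebU]; linarith
  | succ k ih =>
    obtain ⟨hk, hk1⟩ := ih
    have hpos : (0:ℝ) ≤ chebU y (k+1) := by push_cast at hk ⊢; linarith
    refine ⟨by push_cast; linarith, ?_⟩
    show chebU y (k+1) + 1 ≤ chebU y (k+1+1)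
    have : chebU y (k+2) = 2*y*chebU y (k+1) - chebU y k := rfl
    rw [show k+1+1 = k+2 from rfl, this]
    nlinarith

lemma chebU_neg (x : ℝ) : ∀ k : ℕ, chebU (-x) k = (-1)^k * chebU x k := by
  intro k
  induction k using Nat.twoStepInduction with
  | zero => simp [chebU]
  | one => simp [chebU]
  | more k ih1 ih2 =>
    show chebU (-x) (k+2) = _
    have e1 : chebU (-x) (k+2) = 2*(-x)*chebU (-x) (k+1) - chebU (-x) k := rfl
    have e2 : chebU x (k+2) = 2*x*chebU x (k+1) - chebU x k := rfl
    rw [e1, e2, ih1, ih2]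
    ring
lemma chebU_sin (θ : ℝ) : ∀ k : ℕ, chebU (Real.cos θ) k * Real.sin θ = Real.sin (((k:ℝ)+1)*θ) := by
  intro k
  induction k using Nat.twoStepInduction with
  | zero => simp [chebU]
  | one =>
    show 2*Real.cos θ * Real.sin θ = _
    rw [show ((1:ℕ):ℝ)+1 = 2 by norm_num, Real.sin_two_mul]; ring
  | more k ih1 ih2 =>
    have e1 : chebU (Real.cos θ) (k+2) = 2*Real.cos θ*chebU (Real.cos θ) (k+1) - chebU (Real.cos θ) k := rfl
    push_cast at ih1 ih2 ⊢
    have key : Real.sin (((k:ℝ)+2+1)*θ) = 2*Real.cos θ*Real.sin (((k:ℝ)+1+1)*θ) - Real.sin (((k:ℝ)+1)*θ) := by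
      have a1 : ((k:ℝ)+2+1)*θ = ((k:ℝ)+1+1)*θ + θ := by ring
      have a2 : ((k:ℝ)+1)*θ = ((k:ℝ)+1+1)*θ - θ := by ring
      rw [a1, a2, Real.sin_add, Real.sin_sub]; ring
    rw [e1, key, ← ih1, ← ih2]; ring


lemma sing_char (n : ℕ) (hn : 2 ≤ n) (d s : ℝ) (hdet : (tridiag n d s).det = 0) :
    ∃ h : ℕ, 1 ≤ h ∧ h ≤ n ∧ d + 2*s*Real.cos ((h:ℝ)*π/((n:ℝ)+1)) = 0 := by
  obtain ⟨v, hv0, hv⟩ := (Matrix.exists_mulVec_eq_zero_iff).2 hdet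
  set W := extv n v with hW
  have hW0 : W 0 = 0 := extv_zero n v
  have hWtop : W (n+1) = 0 := extv_top n v
  have hWval : ∀ i : Fin n, W (i.1+1) = v i := fun i => extv_val n v i
  have hrow : ∀ i : Fin n, s * W i.1 + d * W (i.1+1) + s * W (i.1+2) = 0 := by
    intro i
    rw [← tridiag_mulVec n d s v i, hv]; rfl
  by_cases hs : s = 0
  · obtain ⟨i, hi⟩ := Function.ne_iff.1 hv0
    rw [Pi.zero_apply] at hi
    have h2 := hrow i
    rw [hs, hWval i] at h2
    simp only [zero_mul, zero_add, add_zero] at h2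
    have hd : d = 0 := by
      rcases mul_eq_zero.1 h2 with h | h
      · exact h
      · exact absurd h hi
    exact ⟨1, le_refl _, by omega, by rw [hd, hs]; ring⟩
  · set x : ℝ := -d/(2*s) with hx
    have hdx : d = -(2*s*x) := by rw [hx]; field_simp
    have hrec : ∀ k : ℕ, k < n → W (k+2) = 2*x*W (k+1) - W k := by
      intro k hk
      have h2 := hrow ⟨k, hk⟩
      simp only at h2
      rw [hdx] at h2
      have h3 : s * (W (k+2)) = s * (2*x*W (k+1) - W k) := by ring_nf; ring_nf at h2; linarith
      exact mul_left_cancel₀ hs h3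
    have claim : ∀ k : ℕ, k ≤ n → W (k+1) = W 1 * chebU x k := by
      intro k
      induction k using Nat.twoStepInduction with
      | zero => intro _; show W 1 = W 1 * 1; ring
      | one =>
        intro h1
        show W 2 = W 1 * (2*x)
        have h2 : W 2 = 2*x*W 1 - W 0 := by simpa using hrec 0 (by omega)
        rw [h2, hW0]; ring
      | more k ih1 ih2 =>
        intro hk2
        have e : chebU x (k+2) = 2*x*chebU x (k+1) - chebU x k := rfl
        rw [show k+2+1 = (k+1)+2 from rfl, hrec (k+1) (by omega), ih2 (by omega),
          ih1 (by omega), e]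
        ring
    have hW1 : W 1 ≠ 0 := by
      intro h1
      apply hv0
      funext i
      have h2 := claim i.1 (le_of_lt i.2)
      rw [h1, zero_mul] at h2
      rw [← hWval i, h2]; rfl
    have hUn : chebU x n = 0 := by
      have h2 := claim n (le_refl _)
      rw [hWtop] at h2
      rcases mul_eq_zero.1 h2.symm with h | h
      · exact absurd h hW1
      · exact h
    have hx1 : |x| < 1 := by
      by_contra hge
      push_neg at hge
      have hn0 : (0:ℝ) ≤ (n:ℝ) := Nat.cast_nonneg n
      rcases le_abs.1 hge with h | h
      · have h2 := (chebU_ge x h n).1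
        rw [hUn] at h2
        linarith
      · have h2 := (chebU_ge (-x) h n).1
        rw [chebU_neg x n, hUn, mul_zero] at h2
        linarith
    have hxlow : -1 < x := by rcases abs_lt.1 hx1 with ⟨h, _⟩; exact h
    have hxhigh : x < 1 := (abs_lt.1 hx1).2
    set θ : ℝ := Real.arccos x with hθ
    have hcos : Real.cos θ = x := Real.cos_arccos (by linarith) (by linarith)
    have hθpos : 0 < θ := Real.arccos_pos.2 hxhigh
    have hθpi : θ < π := by
      have hne : θ ≠ π := by
        rw [hθ]
        intro hcon
        have := Real.arccos_eq_pi.1 hcon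
        linarith
      exact lt_of_le_of_ne (hθ ▸ Real.arccos_le_pi x) hne
    have hsin : Real.sin ((((n:ℕ):ℝ)+1)*θ) = 0 := by
      have h2 := chebU_sin θ n
      rw [hcos, hUn, zero_mul] at h2
      exact h2.symm
    obtain ⟨z, hz⟩ := Real.sin_eq_zero_iff.1 hsin
    have hpi := Real.pi_pos
    have hn1 : (0:ℝ) < (n:ℝ)+1 := by positivity
    have hzpos : 0 < z := by
      by_contra hz0
      push_neg at hz0
      have : (z:ℝ) ≤ 0 := by exact_mod_cast hz0
      nlinarith
    have hzlt : (z:ℤ) < (n:ℤ)+1 := by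
      by_contra hz0
      push_neg at hz0
      have : ((n:ℝ)+1) ≤ (z:ℝ) := by exact_mod_cast hz0
      nlinarith
    refine ⟨z.toNat, by omega, by omega, ?_⟩
    have hzc : ((z.toNat : ℕ):ℝ) = (z:ℝ) := by
      have h4 : (z.toNat : ℤ) = z := Int.toNat_of_nonneg hzpos.le
      exact_mod_cast congrArg (Int.cast : ℤ → ℝ) h4
    have hθval : θ = (z:ℝ)*π/((n:ℝ)+1) := by
      field_simp at hz ⊢
      linarith
    have : Real.cos ((z.toNat:ℝ)*π/((n:ℝ)+1)) = x := by
      rw [hzc, ← hθval, hcos]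
    rw [this, hdx]
    ring

set_option maxHeartbeats 1000000 in
/-- for even `n`, `δ = 0`, `σ ≠ 0` and `c = cos((n/2)π/(n+1)) > 0`, the eigenvalues
`λ_{n/2} = 2σc = −λ_{(n+2)/2}` are the two of smallest magnitude, `κ(n/2) = κ((n+2)/2)`, the
structured distance to singularity is `|λ_{n/2}|/κ(n/2)`, and it is attained by the two distinct
singular symmetric tridiagonal Toeplitz matrices `M± = T ∓ (λ_{n/2}/κ(n/2)²)·(n; 1/n, ±c/(n−1))`. -/
theorem stmt_19 (n : ℕ) (hn : 2 ≤ n) (heven : Even n) (δ σ : ℝ) (hδ : δ = 0) (hσ : σ ≠ 0)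
    (c : ℝ) (hc : c = Real.cos ((n / 2 : ℕ) * Real.pi / (n + 1)))
    (Mp Mm : Matrix (Fin n) (Fin n) ℝ)
    (hMp : Mp = tridiag n δ σ -
      (lam n δ σ (n / 2) / kap n (n / 2) ^ 2) • tridiag n (1 / (n : ℝ)) (c / ((n : ℝ) - 1)))
    (hMm : Mm = tridiag n δ σ +
      (lam n δ σ (n / 2) / kap n (n / 2) ^ 2) • tridiag n (1 / (n : ℝ)) (-c / ((n : ℝ) - 1))) :
    0 < c ∧
    lam n δ σ (n / 2) = 2 * σ * c ∧
    lam n δ σ ((n + 2) / 2) = -lam n δ σ (n / 2) ∧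
    kap n (n / 2) = kap n ((n + 2) / 2) ∧
    (∀ j : ℕ, 1 ≤ j → j ≤ n → |lam n δ σ (n / 2)| ≤ |lam n δ σ j|) ∧
    Mp ≠ Mm ∧
    (∃ d s : ℝ, Mp = tridiag n d s) ∧ Mp.det = 0 ∧
    (∃ d s : ℝ, Mm = tridiag n d s) ∧ Mm.det = 0 ∧
    frobNorm (tridiag n δ σ - Mp) = |lam n δ σ (n / 2)| / kap n (n / 2) ∧
    frobNorm (tridiag n δ σ - Mm) = |lam n δ σ (n / 2)| / kap n (n / 2) ∧
    IsLeast {r : ℝ | ∃ S : Matrix (Fin n) (Fin n) ℝ,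
        S.det = 0 ∧ (∃ d s : ℝ, S = tridiag n d s) ∧
        r = frobNorm (tridiag n δ σ - S)}
      (|lam n δ σ (n / 2)| / kap n (n / 2)) := by
  subst hδ
  set m : ℕ := n / 2 with hm
  have hm2 : n = 2 * m := by obtain ⟨a, ha⟩ := heven; omega
  have hm1 : 1 ≤ m := by omega
  have hpi := Real.pi_pos
  have hncast : (n:ℝ) = 2*(m:ℝ) := by exact_mod_cast hm2
  have hn2 : (2:ℝ) ≤ (n:ℝ) := by exact_mod_cast hn
  have hn0 : (0:ℝ) < (n:ℝ) := by linarith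
  have hn1 : (0:ℝ) < (n:ℝ) - 1 := by linarith
  -- c > 0
  have hcpos : 0 < c := by
    rw [hc]
    have := cos_half_pos m hm1
    rw [show (2*(m:ℝ)+1) = (n:ℝ)+1 by rw [hncast]] at this
    exact this
  -- basic eigenvalue identities
  have hlam : lam n 0 σ m = 2 * σ * c := by
    rw [lam, hc]; ring
  have hlam0 : lam n 0 σ m ≠ 0 := by
    rw [hlam]
    intro hz
    apply hσ
    nlinarith
  have hc' : Real.cos ((m:ℝ) * π / ((n:ℝ)+1)) = c := hc.symm
  have hsucc : (n + 2) / 2 = m + 1 := by omega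
  have hcos2 : Real.cos (((m:ℝ)+1) * π / ((n:ℝ)+1)) = -c := by
    have harg : ((m:ℝ)+1) * π / ((n:ℝ)+1) = π - (m:ℝ)*π/((n:ℝ)+1) := by
      rw [hncast]; field_simp; ring
    rw [harg, Real.cos_pi_sub, hc']
  have hlam2 : lam n 0 σ (m+1) = -lam n 0 σ m := by
    rw [lam, lam]
    push_cast
    rw [hcos2, hc']
    ring
  have hkapeq : kap n m = kap n (m+1) := by
    rw [kap, kap]
    push_cast
    rw [hcos2, hc']
    ring_nf
  -- K
  set K : ℝ := 1/(n:ℝ) + 2/((n:ℝ)-1)*c^2 with hK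
  have hKpos : 0 < K := by
    rw [hK]
    have h1 : 0 < 1/(n:ℝ) := by positivity
    have h2 : 0 < 2/((n:ℝ)-1)*c^2 := by positivity
    linarith
  have hkapdef : kap n m = Real.sqrt K := by rw [kap, hc', hK]
  have hkap2 : kap n m ^ 2 = K := by rw [hkapdef, Real.sq_sqrt hKpos.le]
  have hkappos : 0 < kap n m := by rw [hkapdef]; exact Real.sqrt_pos.2 hKpos
  -- matrices as tridiags
  have hMp' : Mp = tridiag n (0 - (lam n 0 σ m/K)*(1/(n:ℝ))) (σ - (lam n 0 σ m/K)*(c/((n:ℝ)-1))) := by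
    rw [hMp, hkap2, tridiag_smul, tridiag_sub]
  have hMm' : Mm = tridiag n (0 + (lam n 0 σ m/K)*(1/(n:ℝ))) (σ + (lam n 0 σ m/K)*(-c/((n:ℝ)-1))) := by
    rw [hMm, hkap2, tridiag_smul, tridiag_add]
  -- eigen conditions
  have hdetp : Mp.det = 0 := by
    rw [hMp']
    apply tridiag_det_zero n (by omega) _ _ m hm1 (by omega)
    rw [hc', hlam, hK]
    have hKne : (1/(n:ℝ) + 2/((n:ℝ)-1)*c^2) ≠ 0 := by rw [← hK]; exact ne_of_gt hKpos
    have hcancel : (2*σ*c)/(1/(n:ℝ)+2/((n:ℝ)-1)*c^2) * (1/(n:ℝ)+2/((n:ℝ)-1)*c^2) = 2*σ*c :=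
      div_mul_cancel₀ _ hKne
    linear_combination -hcancel
  have hdetm : Mm.det = 0 := by
    rw [hMm']
    apply tridiag_det_zero n (by omega) _ _ (m+1) (by omega) (by omega)
    push_cast
    rw [hcos2, hlam, hK]
    have hKne : (1/(n:ℝ) + 2/((n:ℝ)-1)*c^2) ≠ 0 := by rw [← hK]; exact ne_of_gt hKpos
    have hcancel : (2*σ*c)/(1/(n:ℝ)+2/((n:ℝ)-1)*c^2) * (1/(n:ℝ)+2/((n:ℝ)-1)*c^2) = 2*σ*c :=
      div_mul_cancel₀ _ hKne
    linear_combination hcancel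
  -- frobenius norms
  have hsqrtK : Real.sqrt ((lam n 0 σ m)^2 / K) = |lam n 0 σ m| / kap n m := by
    rw [Real.sqrt_div (sq_nonneg (lam n 0 σ m)), Real.sqrt_sq_eq_abs, hkapdef]
  have hfrobp : frobNorm (tridiag n 0 σ - Mp) = |lam n 0 σ m| / kap n m := by
    have hTsub : tridiag n 0 σ - Mp = tridiag n ((lam n 0 σ m/K)*(1/(n:ℝ))) ((lam n 0 σ m/K)*(c/((n:ℝ)-1))) := by
      rw [hMp, sub_sub_cancel, hkap2, tridiag_smul]
    rw [hTsub, frobNorm, frob_sum_tridiag n (by omega)]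
    rw [show (n:ℝ)*((lam n 0 σ m/K)*(1/(n:ℝ)))^2 + 2*((n:ℝ)-1)*((lam n 0 σ m/K)*(c/((n:ℝ)-1)))^2
        = (lam n 0 σ m)^2 / K by rw [hK]; field_simp]
    exact hsqrtK
  have hfrobm : frobNorm (tridiag n 0 σ - Mm) = |lam n 0 σ m| / kap n m := by
    have hTsub : tridiag n 0 σ - Mm
        = tridiag n (-((lam n 0 σ m/K)*(1/(n:ℝ)))) (-((lam n 0 σ m/K)*(-c/((n:ℝ)-1)))) := by
      rw [hMm]
      rw [sub_add_cancel_left, hkap2, tridiag_smul]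
      ext i j
      simp only [Matrix.neg_apply, tridiag, Matrix.of_apply]
      split_ifs <;> ring
    rw [hTsub, frobNorm, frob_sum_tridiag n (by omega)]
    rw [show (n:ℝ)*(-((lam n 0 σ m/K)*(1/(n:ℝ))))^2 + 2*((n:ℝ)-1)*(-((lam n 0 σ m/K)*(-c/((n:ℝ)-1))))^2
        = (lam n 0 σ m)^2 / K by rw [hK]; field_simp]
    exact hsqrtK
  -- Mp ≠ Mm
  have hne : Mp ≠ Mm := by
    intro hEq
    rw [hMp', hMm'] at hEq
    have := congrFun (congrFun hEq ⟨0, by omega⟩) ⟨0, by omega⟩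
    simp only [tridiag, Matrix.of_apply] at this
    simp only [if_true] at this
    have hlmK : lam n 0 σ m / K ≠ 0 := div_ne_zero hlam0 (ne_of_gt hKpos)
    have : (lam n 0 σ m/K)*(1/(n:ℝ)) = 0 := by linarith
    rcases mul_eq_zero.1 this with h | h
    · exact hlmK h
    · have : (1:ℝ)/(n:ℝ) > 0 := by positivity
      linarith
  -- minimality over j
  have hmin : ∀ j : ℕ, 1 ≤ j → j ≤ n → |lam n 0 σ m| ≤ |lam n 0 σ j| := by
    intro j hj1 hj2
    have hlamj : lam n 0 σ j = 2 * σ * Real.cos ((j:ℝ) * π / ((n:ℝ)+1)) := by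
      rw [lam]; ring
    rw [hlam, hlamj, abs_mul, abs_mul, abs_mul, abs_mul]
    have hcm := cos_min n hn heven j hj1 hj2
    have hcm' : c ≤ |Real.cos ((j:ℝ) * π / ((n:ℝ)+1))| := hc' ▸ hcm
    have : |c| = c := abs_of_pos hcpos
    rw [this]
    have h2 : (0:ℝ) ≤ |2| * |σ| := by positivity
    exact mul_le_mul_of_nonneg_left hcm' h2
  -- IsLeast
  have hlb : ∀ r ∈ {r : ℝ | ∃ S : Matrix (Fin n) (Fin n) ℝ,
      S.det = 0 ∧ (∃ d s : ℝ, S = tridiag n d s) ∧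
      r = frobNorm (tridiag n 0 σ - S)}, |lam n 0 σ m| / kap n m ≤ r := by
    rintro r ⟨S, hSdet, ⟨d, s, rfl⟩, hr⟩
    obtain ⟨h, hh1, hh2, hds⟩ := sing_char n hn d s hSdet
    have hch : c ≤ |Real.cos ((h:ℝ)*π/((n:ℝ)+1))| := by
      have := cos_min n hn heven h hh1 hh2
      rw [← hc] at this
      exact this
    have hle : c^2 ≤ (Real.cos ((h:ℝ)*π/((n:ℝ)+1)))^2 := by
      have h2 : c^2 ≤ |Real.cos ((h:ℝ)*π/((n:ℝ)+1))|^2 := pow_le_pow_left₀ hcpos.le hch 2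
      rwa [sq_abs] at h2
    have hkey := key_bound n hn σ c (Real.cos ((h:ℝ)*π/((n:ℝ)+1))) d s hcpos hle hds
    rw [hr]
    rw [tridiag_sub, frobNorm, frob_sum_tridiag n (by omega)]
    rw [← hsqrtK]
    apply Real.sqrt_le_sqrt
    calc (lam n 0 σ m)^2 / K = (2*σ*c)^2 / (1/(n:ℝ) + 2/((n:ℝ)-1)*c^2) := by rw [hlam, hK]
    _ ≤ (n:ℝ)*d^2 + 2*((n:ℝ)-1)*(σ-s)^2 := hkey
    _ = (n:ℝ)*(0-d)^2 + 2*((n:ℝ)-1)*(σ-s)^2 := by ring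
  refine ⟨hcpos, hlam, ?_, ?_, hmin, hne, ⟨_, _, hMp'⟩, hdetp, ⟨_, _, hMm'⟩, hdetm,
    hfrobp, hfrobm, ?_, hlb⟩
  · rw [hsucc]; exact hlam2
  · rw [hsucc]; exact hkapeq
  · exact ⟨Mp, hdetp, ⟨_, _, hMp'⟩, hfrobp.symm⟩
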